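/- arXiv:math/0108048 — 6 statements merged into one kernel-verified Lean document; each statement's English description precedes it below -/
import Mathlib

section
/- Let V = (v₁, v₂) be a C¹ unit vector field on an open set U ⊂ ℝ² with div V = 0, and let u : U → ℝ be a C¹ solution of the linear first-order PDE v₂·(u_x - y) - v₁·(u_y + x) = 0. Then at every point of U where (u_x - y)² + (u_y + x)² ≠ 0, u satisfies the Heisenberg minimal surface equation div((p,q)/√(p²+q²)) = 0 with p = u_x - y, q = u_y + x, and moreover the unit vector (p,q)/√(p²+q²) equals ±V at such points. -/
open MeasureTheory Real Filter

/-- `p = u_x - y`, the X-derivative of `F(x,y,z) = u(x,y) - z`. -/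
noncomputable def pA (u : ℝ × ℝ → ℝ) (z : ℝ × ℝ) : ℝ :=
  deriv (fun x => u (x, z.2)) z.1 - z.2

/-- `q = u_y + x`, the Y-derivative of `F(x,y,z) = u(x,y) - z`. -/
noncomputable def qA (u : ℝ × ℝ → ℝ) (z : ℝ × ℝ) : ℝ :=
  deriv (fun y => u (z.1, y)) z.2 + z.1

/-- first component of the horizontal Gauss map -/
noncomputable def nh1 (u : ℝ × ℝ → ℝ) (z : ℝ × ℝ) : ℝ :=
  pA u z / Real.sqrt ((pA u z) ^ 2 + (qA u z) ^ 2)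

/-- second component of the horizontal Gauss map -/
noncomputable def nh2 (u : ℝ × ℝ → ℝ) (z : ℝ × ℝ) : ℝ :=
  qA u z / Real.sqrt ((pA u z) ^ 2 + (qA u z) ^ 2)

/-- the Heisenberg minimal surface operator: planar divergence of the horizontal Gauss map -/
noncomputable def msOp (u : ℝ × ℝ → ℝ) (z : ℝ × ℝ) : ℝ :=
  deriv (fun x => nh1 u (x, z.2)) z.1 + deriv (fun y => nh2 u (z.1, y)) z.2

/-- Prescribed Gauss map: divergence-free unit `C¹` vector fields and
solutions of the associated transport equation give minimal surfaces. -/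
theorem prescribed_gauss_map (U : Set (ℝ × ℝ)) (hU : IsOpen U)
    (v1 v2 : ℝ × ℝ → ℝ) (hv1 : ContDiffOn ℝ 1 v1 U) (hv2 : ContDiffOn ℝ 1 v2 U)
    (hunit : ∀ z ∈ U, (v1 z) ^ 2 + (v2 z) ^ 2 = 1)
    (hdiv : ∀ z ∈ U,
      deriv (fun x => v1 (x, z.2)) z.1 + deriv (fun y => v2 (z.1, y)) z.2 = 0)
    (u : ℝ × ℝ → ℝ) (hu : ContDiffOn ℝ 1 u U)
    (hpde : ∀ z ∈ U, v2 z * pA u z - v1 z * qA u z = 0) :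
    ∀ z ∈ U, (pA u z) ^ 2 + (qA u z) ^ 2 ≠ 0 →
      msOp u z = 0 ∧
      ((nh1 u z, nh2 u z) = (v1 z, v2 z) ∨
       (nh1 u z, nh2 u z) = (-v1 z, -v2 z)) := by
  intro z hz hnz
  set P : ℝ × ℝ → ℝ := fun w => fderiv ℝ u w (1, 0) - w.2 with hPdef
  set Q : ℝ × ℝ → ℝ := fun w => fderiv ℝ u w (0, 1) + w.1 with hQdef
  have hdiffu : ∀ w ∈ U, DifferentiableAt ℝ u w := fun w hw =>
    (hu.differentiableOn one_ne_zero).differentiableAt (hU.mem_nhds hw)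
  have hpP : ∀ w ∈ U, pA u w = P w := by
    intro w hw
    have h1 : HasDerivAt (fun x : ℝ => u (x, w.2)) (fderiv ℝ u w (1, 0)) w.1 :=
      ((hdiffu w hw).hasFDerivAt).comp_hasDerivAt w.1
        ((hasDerivAt_id w.1).prodMk (hasDerivAt_const w.1 w.2))
    simp [pA, h1.deriv, hPdef]
  have hqQ : ∀ w ∈ U, qA u w = Q w := by
    intro w hw
    have h1 : HasDerivAt (fun y : ℝ => u (w.1, y)) (fderiv ℝ u w (0, 1)) w.2 :=
      ((hdiffu w hw).hasFDerivAt).comp_hasDerivAt w.2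
        ((hasDerivAt_const w.2 w.1).prodMk (hasDerivAt_id w.2))
    simp [qA, h1.deriv, hQdef]
  have hfderivC : ContinuousOn (fderiv ℝ u) U :=
    hu.continuousOn_fderiv_of_isOpen hU le_rfl
  have hPc : ContinuousOn P U :=
    (hfderivC.clm_apply continuousOn_const).sub continuous_snd.continuousOn
  have hQc : ContinuousOn Q U :=
    (hfderivC.clm_apply continuousOn_const).add continuous_fst.continuousOn
  set S : ℝ × ℝ → ℝ := fun w => P w * v1 w + Q w * v2 w with hSdef
  have hSc : ContinuousOn S U := (hPc.mul hv1.continuousOn).add (hQc.mul hv2.continuousOn)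
  have key : ∀ w ∈ U, P w = S w * v1 w ∧ Q w = S w * v2 w ∧ S w ^ 2 = P w ^ 2 + Q w ^ 2 := by
    intro w hw
    have h1 := hunit w hw
    have h2 := hpde w hw
    rw [hpP w hw, hqQ w hw] at h2
    have e1 : P w = S w * v1 w := by
      rw [hSdef]; linear_combination (-(P w)) * h1 + v2 w * h2
    have e2 : Q w = S w * v2 w := by
      rw [hSdef]; linear_combination (-(Q w)) * h1 + (-(v1 w)) * h2
    refine ⟨e1, e2, ?_⟩
    rw [e1, e2]; linear_combination (-(S w)^2) * h1
  have hSz : S z ≠ 0 := by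
    intro h0
    apply hnz
    rw [hpP z hz, hqQ z hz, ← (key z hz).2.2, h0]
    ring
  have hScz : ContinuousAt S z := hSc.continuousAt (hU.mem_nhds hz)
  obtain ⟨ε, hε, hev⟩ : ∃ ε : ℝ, (ε = 1 ∨ ε = -1) ∧ ∀ᶠ w in nhds z, 0 < ε * S w := by
    rcases hSz.lt_or_gt with h | h
    · refine ⟨-1, Or.inr rfl, ?_⟩
      have h' : ∀ᶠ w in nhds z, S w < 0 := hScz.eventually_lt continuousAt_const h
      filter_upwards [h'] with w hw; linarith
    · refine ⟨1, Or.inl rfl, ?_⟩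
      have h' : ∀ᶠ w in nhds z, 0 < S w := continuousAt_const.eventually_lt hScz h
      filter_upwards [h'] with w hw; linarith
  have hUev : ∀ᶠ w in nhds z, w ∈ U := hU.mem_nhds hz
  have habs : ∀ w, 0 < ε * S w → |S w| = ε * S w := by
    intro w hw
    rcases hε with h | h <;> subst h
    · rw [one_mul] at hw ⊢; exact abs_of_pos hw
    · have : S w < 0 := by linarith
      rw [abs_of_neg this]; ring
  have hsqrt : ∀ w ∈ U, 0 < ε * S w →
      Real.sqrt (pA u w ^ 2 + qA u w ^ 2) = ε * S w := by
    intro w hw hps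
    rw [hpP w hw, hqQ w hw, ← (key w hw).2.2, Real.sqrt_sq_eq_abs]
    exact habs w hps
  have hnh1 : ∀ᶠ w in nhds z, nh1 u w = ε * v1 w := by
    filter_upwards [hev, hUev] with w hps hw
    have hSw : S w ≠ 0 := right_ne_zero_of_mul (ne_of_gt hps)
    have hεne : ε ≠ 0 := by rcases hε with h | h <;> subst h <;> norm_num
    unfold nh1
    rw [hsqrt w hw hps, hpP w hw, (key w hw).1]
    field_simp
    rcases hε with h | h <;> subst h <;> ring
  have hnh2 : ∀ᶠ w in nhds z, nh2 u w = ε * v2 w := by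
    filter_upwards [hev, hUev] with w hps hw
    have hSw : S w ≠ 0 := right_ne_zero_of_mul (ne_of_gt hps)
    have hεne : ε ≠ 0 := by rcases hε with h | h <;> subst h <;> norm_num
    unfold nh2
    rw [hsqrt w hw hps, hqQ w hw, (key w hw).2.1]
    field_simp
    rcases hε with h | h <;> subst h <;> ring
  have hcx : ContinuousAt (fun x : ℝ => ((x, z.2) : ℝ × ℝ)) z.1 :=
    (continuous_id.prodMk continuous_const).continuousAt
  have hcy : ContinuousAt (fun y : ℝ => ((z.1, y) : ℝ × ℝ)) z.2 :=
    (continuous_const.prodMk continuous_id).continuousAt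
  have hline1 : (fun x => nh1 u (x, z.2)) =ᶠ[nhds z.1] (fun x => ε * v1 (x, z.2)) :=
    hcx.eventually hnh1
  have hline2 : (fun y => nh2 u (z.1, y)) =ᶠ[nhds z.2] (fun y => ε * v2 (z.1, y)) :=
    hcy.eventually hnh2
  have hv1d : DifferentiableAt ℝ (fun x : ℝ => v1 (x, z.2)) z.1 := by
    have h := (hv1.differentiableOn one_ne_zero).differentiableAt (hU.mem_nhds hz)
    exact h.comp z.1 (differentiableAt_id.prodMk (differentiableAt_const _))
  have hv2d : DifferentiableAt ℝ (fun y : ℝ => v2 (z.1, y)) z.2 := by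
    have h := (hv2.differentiableOn one_ne_zero).differentiableAt (hU.mem_nhds hz)
    exact h.comp z.2 ((differentiableAt_const _).prodMk differentiableAt_id)
  have d1 : deriv (fun x => nh1 u (x, z.2)) z.1 = ε * deriv (fun x => v1 (x, z.2)) z.1 := by
    rw [hline1.deriv_eq, deriv_const_mul _ hv1d]
  have d2 : deriv (fun y => nh2 u (z.1, y)) z.2 = ε * deriv (fun y => v2 (z.1, y)) z.2 := by
    rw [hline2.deriv_eq, deriv_const_mul _ hv2d]
  have hms : msOp u z = 0 := by
    unfold msOp
    rw [d1, d2, ← mul_add, hdiv z hz, mul_zero]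
  refine ⟨hms, ?_⟩
  have h1 := hnh1.self_of_nhds
  have h2 := hnh2.self_of_nhds
  rcases hε with h | h <;> subst h
  · left; rw [h1, h2]; simp
  · right; rw [h1, h2]; norm_num
end

section
/- For any α ∈ (-1,1) and any C¹ function g : ℝ → ℝ, the function u(x,y) = (α/√(1-α²))·x² + xy + g(y + (α/√(1-α²))·x) satisfies the Heisenberg minimal surface equation at every noncharacteristic point, and its unit horizontal normal equals ±(α, √(1-α²)) at such points. -/
open MeasureTheory Real Filter

open Topology

/-- The constant-Gauss-map family of minimal graphs. -/
theorem constant_gauss_map_family (α : ℝ) (hα : α ∈ Set.Ioo (-1 : ℝ) 1)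
    (g : ℝ → ℝ) (hg : ContDiff ℝ 1 g) (u : ℝ × ℝ → ℝ)
    (hu : u = fun w =>
      α / Real.sqrt (1 - α ^ 2) * w.1 ^ 2 + w.1 * w.2 +
        g (w.2 + α / Real.sqrt (1 - α ^ 2) * w.1))
    (z : ℝ × ℝ) (hz : (pA u z) ^ 2 + (qA u z) ^ 2 ≠ 0) :
    msOp u z = 0 ∧
    ((nh1 u z, nh2 u z) = (α, Real.sqrt (1 - α ^ 2)) ∨
     (nh1 u z, nh2 u z) = (-α, -Real.sqrt (1 - α ^ 2))) := by
  obtain ⟨ha1, ha2⟩ := hα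
  have hα2 : (0:ℝ) < 1 - α ^ 2 := by nlinarith
  set s := Real.sqrt (1 - α ^ 2) with hsdef
  have hspos : 0 < s := Real.sqrt_pos.mpr hα2
  have hs2 : s ^ 2 = 1 - α ^ 2 := Real.sq_sqrt hα2.le
  set β := α / s with hbdef
  have hgd : Differentiable ℝ g := hg.differentiable one_ne_zero
  set Q : ℝ × ℝ → ℝ := fun w => 2 * w.1 + deriv g (w.2 + β * w.1) with hQdef
  have hQc : Continuous Q := by
    have hdg : Continuous (deriv g) := hg.continuous_deriv le_rfl
    fun_prop
  -- p = β Q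
  have hp : ∀ w : ℝ × ℝ, pA u w = β * Q w := by
    intro w
    have hgpart : HasDerivAt (fun x => g (w.2 + β * x)) (deriv g (w.2 + β * w.1) * β) w.1 := by
      have hin : HasDerivAt (fun x : ℝ => w.2 + β * x) β w.1 := by
        simpa using ((hasDerivAt_id w.1).const_mul β).const_add w.2
      exact (hgd (w.2 + β * w.1)).hasDerivAt.comp w.1 hin
    have h1 : HasDerivAt (fun x : ℝ => β * x ^ 2) (β * (2 * w.1)) w.1 := by
      simpa using (hasDerivAt_pow 2 w.1).const_mul β
    have h2 : HasDerivAt (fun x : ℝ => x * w.2) w.2 w.1 := by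
      simpa using (hasDerivAt_id w.1).mul_const w.2
    have hx : HasDerivAt (fun x => u (x, w.2))
        (β * (2 * w.1) + w.2 + deriv g (w.2 + β * w.1) * β) w.1 := by
      rw [hu]; exact (h1.add h2).add hgpart
    unfold pA
    rw [hx.deriv, hQdef]; ring
  -- q = Q
  have hq : ∀ w : ℝ × ℝ, qA u w = Q w := by
    intro w
    have hgpart : HasDerivAt (fun y => g (y + β * w.1)) (deriv g (w.2 + β * w.1) * 1) w.2 := by
      have hin : HasDerivAt (fun y : ℝ => y + β * w.1) 1 w.2 :=
        (hasDerivAt_id w.2).add_const (β * w.1)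
      exact (hgd (w.2 + β * w.1)).hasDerivAt.comp w.2 hin
    have h1 : HasDerivAt (fun _ : ℝ => β * w.1 ^ 2) 0 w.2 := hasDerivAt_const _ _
    have h2 : HasDerivAt (fun y : ℝ => w.1 * y) w.1 w.2 := by
      simpa using (hasDerivAt_id w.2).const_mul w.1
    have hy : HasDerivAt (fun y => u (w.1, y))
        (0 + w.1 + deriv g (w.2 + β * w.1) * 1) w.2 := by
      rw [hu]; exact (h1.add h2).add hgpart
    unfold qA
    rw [hy.deriv, hQdef]; ring
  have hsum : ∀ w : ℝ × ℝ, (pA u w) ^ 2 + (qA u w) ^ 2 = (Q w / s) ^ 2 := by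
    intro w
    rw [hp w, hq w, hbdef]
    field_simp
    nlinarith [hs2, sq_nonneg (Q w)]
  have hbs : β * s = α := by rw [hbdef]; field_simp
  have key1 : ∀ t : ℝ, t ≠ 0 → β * t / (t / s) = α := by
    intro t ht
    rw [div_div_eq_mul_div, mul_right_comm, hbs, mul_div_assoc, div_self ht, mul_one]
  have key2 : ∀ t : ℝ, t ≠ 0 → t / (t / s) = s := by
    intro t ht
    rw [div_div_eq_mul_div, mul_comm, mul_div_assoc, div_self ht, mul_one]
  -- values on Q > 0
  have hpos : ∀ w : ℝ × ℝ, 0 < Q w → nh1 u w = α ∧ nh2 u w = s := by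
    intro w hw
    have hsq : Real.sqrt ((pA u w) ^ 2 + (qA u w) ^ 2) = Q w / s := by
      rw [hsum w]; exact Real.sqrt_sq (by positivity)
    constructor
    · unfold nh1; rw [hsq, hp w]; exact key1 _ hw.ne'
    · unfold nh2; rw [hsq, hq w]; exact key2 _ hw.ne'
  have hneg : ∀ w : ℝ × ℝ, Q w < 0 → nh1 u w = -α ∧ nh2 u w = -s := by
    intro w hw
    have hsq : Real.sqrt ((pA u w) ^ 2 + (qA u w) ^ 2) = -(Q w / s) := by
      rw [hsum w, ← neg_pow_two (Q w / s)]
      exact Real.sqrt_sq (le_of_lt (neg_pos.mpr (div_neg_of_neg_of_pos hw hspos)))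
    have hQne : Q w ≠ 0 := hw.ne
    constructor
    · unfold nh1; rw [hsq, hp w, div_neg, key1 _ hw.ne]
    · unfold nh2; rw [hsq, hq w, div_neg, key2 _ hw.ne]
  have hQz : Q z ≠ 0 := by
    intro h
    apply hz
    rw [hsum z, h]; simp
  rcases hQz.lt_or_gt with hlt | hgt
  · -- Q z < 0
    have hx : ∀ᶠ x in 𝓝 z.1, Q (x, z.2) < 0 :=
      ((hQc.comp (continuous_id.prodMk continuous_const)).continuousAt).eventually
        (eventually_lt_nhds hlt)
    have hy : ∀ᶠ y in 𝓝 z.2, Q (z.1, y) < 0 :=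
      ((hQc.comp (continuous_const.prodMk continuous_id)).continuousAt).eventually
        (eventually_lt_nhds hlt)
    have h1 : (fun x => nh1 u (x, z.2)) =ᶠ[𝓝 z.1] fun _ => -α :=
      hx.mono fun x hx => (hneg (x, z.2) hx).1
    have h2 : (fun y => nh2 u (z.1, y)) =ᶠ[𝓝 z.2] fun _ => -s :=
      hy.mono fun y hy => (hneg (z.1, y) hy).2
    refine ⟨?_, Or.inr ?_⟩
    · unfold msOp
      rw [h1.deriv_eq, h2.deriv_eq, deriv_const, deriv_const]; ring
    · obtain ⟨e1, e2⟩ := hneg z hlt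
      rw [e1, e2]
  · have hx : ∀ᶠ x in 𝓝 z.1, 0 < Q (x, z.2) :=
      ((hQc.comp (continuous_id.prodMk continuous_const)).continuousAt).eventually
        (eventually_gt_nhds hgt)
    have hy : ∀ᶠ y in 𝓝 z.2, 0 < Q (z.1, y) :=
      ((hQc.comp (continuous_const.prodMk continuous_id)).continuousAt).eventually
        (eventually_gt_nhds hgt)
    have h1 : (fun x => nh1 u (x, z.2)) =ᶠ[𝓝 z.1] fun _ => α :=
      hx.mono fun x hx => (hpos (x, z.2) hx).1
    have h2 : (fun y => nh2 u (z.1, y)) =ᶠ[𝓝 z.2] fun _ => s :=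
      hy.mono fun y hy => (hpos (z.1, y) hy).2
    refine ⟨?_, Or.inl ?_⟩
    · unfold msOp
      rw [h1.deriv_eq, h2.deriv_eq, deriv_const, deriv_const]; ring
    · obtain ⟨e1, e2⟩ := hpos z hgt
      rw [e1, e2]
end

section
/- For any C¹ function g : ℝ → ℝ, the function u(x,y) = g(y/x) satisfies the Heisenberg minimal surface equation on the half-plane x > 0, at every point where (u_x - y)² + (u_y + x)² ≠ 0. -/
open MeasureTheory Real Filter

lemma hasDerivAt_inv_sqrt (c t : ℝ) (h : 0 < t^2 + c) :
    HasDerivAt (fun t => (Real.sqrt (t^2+c))⁻¹) (-(t/((t^2+c)*Real.sqrt (t^2+c)))) t := by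
  have h1 : HasDerivAt (fun t : ℝ => t^2 + c) (2*t) t := by
    simpa using ((hasDerivAt_pow 2 t).add_const c)
  have h2 : HasDerivAt Real.sqrt (1/(2*Real.sqrt (t^2+c))) (t^2+c) :=
    Real.hasDerivAt_sqrt h.ne'
  have h3 := (h2.comp t h1)
  have hs : Real.sqrt (t^2+c) ≠ 0 := (Real.sqrt_pos.mpr h).ne'
  have h4 := h3.inv (by simpa using hs)
  refine h4.congr_deriv ?_
  simp only [Function.comp_apply]
  rw [Real.sq_sqrt h.le]
  field_simp

lemma pq_formula (g : ℝ → ℝ) (hg : ContDiff ℝ 1 g) (x y : ℝ) (hx : x ≠ 0) :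
    pA (fun w => g (w.2 / w.1)) (x, y) = -y * (deriv g (y/x) + x^2) / x^2 ∧
    qA (fun w => g (w.2 / w.1)) (x, y) = (deriv g (y/x) + x^2) / x := by
  have hgd : ∀ t, HasDerivAt g (deriv g t) t := fun t =>
    ((hg.differentiable one_ne_zero) t).hasDerivAt
  constructor
  · have hinner : HasDerivAt (fun s : ℝ => y / s) (y * (-(x^2)⁻¹)) x := by
      simpa [div_eq_mul_inv] using (hasDerivAt_inv hx).const_mul y
    have h : HasDerivAt (fun s : ℝ => g (y / s)) (deriv g (y/x) * (y * (-(x^2)⁻¹))) x :=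
      (hgd (y/x)).comp x hinner
    simp only [pA]
    rw [h.deriv]
    field_simp
    ring
  · have hinner : HasDerivAt (fun s : ℝ => s / x) (1/x) y := by
      simpa using (hasDerivAt_id y).div_const x
    have h : HasDerivAt (fun s : ℝ => g (s / x)) (deriv g (y/x) * (1/x)) y :=
      (hgd (y/x)).comp y hinner
    simp only [qA]
    rw [h.deriv]
    field_simp

lemma nh_formula (g : ℝ → ℝ) (hg : ContDiff ℝ 1 g) (x y s : ℝ)
    (hx : 0 < x) (hss : s * s = 1)
    (hs : s * |deriv g (y/x) + x^2| = deriv g (y/x) + x^2)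
    (hB : deriv g (y/x) + x^2 ≠ 0) :
    nh1 (fun w => g (w.2 / w.1)) (x, y) = s * (-y) / Real.sqrt (x^2+y^2) ∧
    nh2 (fun w => g (w.2 / w.1)) (x, y) = s * x / Real.sqrt (x^2+y^2) := by
  obtain ⟨hp, hq⟩ := pq_formula g hg x y hx.ne'
  set B := deriv g (y/x) + x^2 with hBdef
  have hR : (0:ℝ) < x^2 + y^2 := by positivity
  have hsq : pA (fun w => g (w.2 / w.1)) (x, y) ^ 2 + qA (fun w => g (w.2 / w.1)) (x, y) ^ 2
      = (|B| * Real.sqrt (x^2+y^2) / x^2)^2 := by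
    have h2 : (|B| * Real.sqrt (x^2+y^2) / x^2)^2 = B^2 * (x^2+y^2) / x^4 := by
      rw [div_pow, mul_pow, sq_abs, Real.sq_sqrt hR.le]; ring
    rw [hp, hq, h2]
    field_simp
    ring
  have habsB : |B| = s * B := by
    have := congrArg (fun t => s * t) hs.symm
    simpa [← mul_assoc, hss] using this.symm
  have hsqrt : Real.sqrt (pA (fun w => g (w.2 / w.1)) (x, y) ^ 2 + qA (fun w => g (w.2 / w.1)) (x, y) ^ 2)
      = s * B * Real.sqrt (x^2+y^2) / x^2 := by
    rw [hsq, Real.sqrt_sq (by positivity), habsB]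
  have hs0 : s ≠ 0 := by rintro rfl; simp at hss
  have hrs : Real.sqrt (x^2+y^2) ≠ 0 := (Real.sqrt_pos.mpr hR).ne'
  rcases mul_self_eq_one_iff.mp hss with h1 | h1 <;> subst h1 <;>
    constructor <;>
    [rw [nh1, hsqrt, hp]; rw [nh2, hsqrt, hq]; rw [nh1, hsqrt, hp]; rw [nh2, hsqrt, hq]] <;>
    field_simp <;> ring

/-- For `g ∈ C¹`, the surface `z = g(y/x)` satisfies the Heisenberg minimal
surface equation on the half-plane `x > 0` at noncharacteristic points. -/
theorem helicoidal_family_minimal (g : ℝ → ℝ) (hg : ContDiff ℝ 1 g)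
    (z : ℝ × ℝ) (hx : 0 < z.1)
    (hz : (pA (fun w => g (w.2 / w.1)) z) ^ 2 +
          (qA (fun w => g (w.2 / w.1)) z) ^ 2 ≠ 0) :
    msOp (fun w => g (w.2 / w.1)) z = 0 := by
  obtain ⟨zx, zy⟩ := z
  simp only at hx hz ⊢
  obtain ⟨hp, hq⟩ := pq_formula g hg zx zy hx.ne'
  set Bz := deriv g (zy/zx) + zx^2 with hBzdef
  have hBz : Bz ≠ 0 := by
    intro h
    apply hz
    rw [hp, hq, h]
    simp
  have hc : Continuous (deriv g) := hg.continuous_deriv le_rfl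
  have hf1 : ContinuousAt (fun x => deriv g (zy/x) + x^2) zx := by
    exact ((hc.continuousAt).comp (continuousAt_const.div continuousAt_id hx.ne')).add
      (continuousAt_id.pow 2)
  have hf2 : ContinuousAt (fun y => deriv g (y/zx) + zx^2) zy := by
    exact ((hc.continuousAt).comp (continuousAt_id.div continuousAt_const hx.ne')).add
      continuousAt_const
  obtain ⟨s, hss, hev1, hev2⟩ : ∃ s : ℝ, s * s = 1 ∧
      (∀ᶠ x in nhds zx, s * |deriv g (zy/x) + x^2| = deriv g (zy/x) + x^2 ∧
        deriv g (zy/x) + x^2 ≠ 0) ∧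
      (∀ᶠ y in nhds zy, s * |deriv g (y/zx) + zx^2| = deriv g (y/zx) + zx^2 ∧
        deriv g (y/zx) + zx^2 ≠ 0) := by
    rcases hBz.lt_or_gt with hneg | hpos
    · refine ⟨-1, by norm_num, ?_, ?_⟩
      · filter_upwards [hf1 (Iio_mem_nhds hneg)] with x hxB
        exact ⟨by rw [abs_of_neg hxB]; ring, ne_of_lt hxB⟩
      · filter_upwards [hf2 (Iio_mem_nhds hneg)] with y hyB
        exact ⟨by rw [abs_of_neg hyB]; ring, ne_of_lt hyB⟩
    · refine ⟨1, by norm_num, ?_, ?_⟩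
      · filter_upwards [hf1 (Ioi_mem_nhds hpos)] with x hxB
        exact ⟨by rw [abs_of_pos hxB]; ring, ne_of_gt hxB⟩
      · filter_upwards [hf2 (Ioi_mem_nhds hpos)] with y hyB
        exact ⟨by rw [abs_of_pos hyB]; ring, ne_of_gt hyB⟩
  have hR : (0:ℝ) < zx^2 + zy^2 := by positivity
  have hR' : (0:ℝ) < zy^2 + zx^2 := by positivity
  have hEq1 : (fun x => nh1 (fun w => g (w.2 / w.1)) (x, zy)) =ᶠ[nhds zx]
      (fun x => s * (-zy) * (Real.sqrt (x^2 + zy^2))⁻¹) := by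
    filter_upwards [hev1, eventually_gt_nhds hx] with x hxB hx0
    have := (nh_formula g hg x zy s hx0 hss hxB.1 hxB.2).1
    simpa [div_eq_mul_inv] using this
  have hEq2 : (fun y => nh2 (fun w => g (w.2 / w.1)) (zx, y)) =ᶠ[nhds zy]
      (fun y => s * zx * (Real.sqrt (y^2 + zx^2))⁻¹) := by
    filter_upwards [hev2] with y hyB
    have := (nh_formula g hg zx y s hx hss hyB.1 hyB.2).2
    simpa [div_eq_mul_inv, add_comm] using this
  have hd1 : deriv (fun x => nh1 (fun w => g (w.2 / w.1)) (x, zy)) zx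
      = s * (-zy) * (-(zx/((zx^2+zy^2)*Real.sqrt (zx^2+zy^2)))) := by
    rw [hEq1.deriv_eq]
    exact (((hasDerivAt_inv_sqrt (zy^2) zx hR).const_mul (s * (-zy)))).deriv
  have hd2 : deriv (fun y => nh2 (fun w => g (w.2 / w.1)) (zx, y)) zy
      = s * zx * (-(zy/((zy^2+zx^2)*Real.sqrt (zy^2+zx^2)))) := by
    rw [hEq2.deriv_eq]
    exact (((hasDerivAt_inv_sqrt (zx^2) zy hR').const_mul (s * zx))).deriv
  rw [msOp]
  simp only at hd1 hd2 ⊢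
  rw [hd1, hd2, show zy^2 + zx^2 = zx^2 + zy^2 from add_comm _ _]
  ring
end

section
/- Both u₁(x,y) = x² + xy and u₂(x,y) = xy + 1 - y² satisfy the Heisenberg minimal surface equation on the open unit disk (at noncharacteristic points), and they agree on the unit circle: for all θ, u₁(cos θ, sin θ) = u₂(cos θ, sin θ) = cos²θ + sin θ cos θ. Yet u₁ ≠ u₂ on the open disk; hence the Dirichlet problem for the Heisenberg minimal surface equation does not have unique solutions. -/
open MeasureTheory Real Filter

lemma deriv_evconst {f : ℝ → ℝ} {x c : ℝ} (h : ∀ᶠ y in nhds x, f y = c) :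
    deriv f x = 0 := by
  have h' : f =ᶠ[nhds x] fun _ => c := h
  rw [h'.deriv_eq, deriv_const]

lemma p1 (z : ℝ × ℝ) : pA (fun w => w.1 ^ 2 + w.1 * w.2) z = 2 * z.1 := by
  unfold pA
  have h : deriv (fun x : ℝ => x ^ 2 + x * z.2) z.1 = 2 * z.1 + z.2 := by
    simpa using ((hasDerivAt_pow 2 z.1).add ((hasDerivAt_id z.1).mul_const z.2)).deriv
  rw [show (fun x : ℝ => (x, z.2).1 ^ 2 + (x, z.2).1 * (x, z.2).2) = fun x : ℝ => x ^ 2 + x * z.2 from rfl, h]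
  ring

lemma q1 (z : ℝ × ℝ) : qA (fun w => w.1 ^ 2 + w.1 * w.2) z = 2 * z.1 := by
  unfold qA
  have h : deriv (fun y : ℝ => z.1 ^ 2 + z.1 * y) z.2 = z.1 := by
    simpa using (((hasDerivAt_id z.2).const_mul z.1).const_add (z.1 ^ 2)).deriv
  rw [show (fun y : ℝ => (z.1, y).1 ^ 2 + (z.1, y).1 * (z.1, y).2) = fun y : ℝ => z.1 ^ 2 + z.1 * y from rfl, h]
  ring

lemma p2 (z : ℝ × ℝ) : pA (fun w => w.1 * w.2 + 1 - w.2 ^ 2) z = 0 := by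
  unfold pA
  have h : deriv (fun x : ℝ => x * z.2 + 1 - z.2 ^ 2) z.1 = z.2 := by
    simpa using ((((hasDerivAt_id z.1).mul_const z.2).add_const 1).sub_const (z.2 ^ 2)).deriv
  rw [show (fun x : ℝ => (x, z.2).1 * (x, z.2).2 + 1 - (x, z.2).2 ^ 2) = fun x : ℝ => x * z.2 + 1 - z.2 ^ 2 from rfl, h]
  ring

lemma q2 (z : ℝ × ℝ) : qA (fun w => w.1 * w.2 + 1 - w.2 ^ 2) z = 2 * z.1 - 2 * z.2 := by
  unfold qA
  have h : deriv (fun y : ℝ => z.1 * y + 1 - y ^ 2) z.2 = z.1 - 2 * z.2 := by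
    simpa [Pi.sub_def] using ((((hasDerivAt_id z.2).const_mul z.1).add_const 1).sub (hasDerivAt_pow 2 z.2)).deriv
  rw [show (fun y : ℝ => (z.1, y).1 * (z.1, y).2 + 1 - (z.1, y).2 ^ 2) = fun y : ℝ => z.1 * y + 1 - y ^ 2 from rfl, h]
  ring

lemma sgn_eq {t : ℝ} (ht : t ≠ 0) :
    t / Real.sqrt (t ^ 2 + t ^ 2) = (if 0 < t then 1 else -1) / Real.sqrt 2 := by
  have h2 : Real.sqrt (t ^ 2 + t ^ 2) = Real.sqrt 2 * |t| := by
    rw [show t ^ 2 + t ^ 2 = 2 * t ^ 2 by ring, Real.sqrt_mul (by norm_num), Real.sqrt_sq_eq_abs]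
  rw [h2]
  rcases lt_or_gt_of_ne ht with h | h
  · rw [if_neg (by linarith), abs_of_neg h]
    field_simp
  · rw [if_pos h, abs_of_pos h]
    rw [div_eq_div_iff (by positivity) (Real.sqrt_pos.mpr (by norm_num)).ne']
    ring

lemma sgn_eq' {t : ℝ} (ht : t ≠ 0) :
    t / Real.sqrt (0 ^ 2 + t ^ 2) = if 0 < t then 1 else -1 := by
  rw [show (0:ℝ) ^ 2 + t ^ 2 = t ^ 2 by ring, Real.sqrt_sq_eq_abs]
  rcases lt_or_gt_of_ne ht with h | h
  · rw [if_neg (by linarith), abs_of_neg h]; field_simp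
  · rw [if_pos h, abs_of_pos h, div_self h.ne']

/-- Non-uniqueness for the Dirichlet problem: `u₁ = x² + xy` and
`u₂ = xy + 1 - y²` both satisfy the minimal surface equation on the open unit
disk, agree on the unit circle, but differ inside the disk. -/
theorem dirichlet_nonuniqueness :
    (∀ z ∈ {w : ℝ × ℝ | w.1 ^ 2 + w.2 ^ 2 < 1},
      (pA (fun w => w.1 ^ 2 + w.1 * w.2) z) ^ 2 +
        (qA (fun w => w.1 ^ 2 + w.1 * w.2) z) ^ 2 ≠ 0 →
        msOp (fun w => w.1 ^ 2 + w.1 * w.2) z = 0) ∧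
    (∀ z ∈ {w : ℝ × ℝ | w.1 ^ 2 + w.2 ^ 2 < 1},
      (pA (fun w => w.1 * w.2 + 1 - w.2 ^ 2) z) ^ 2 +
        (qA (fun w => w.1 * w.2 + 1 - w.2 ^ 2) z) ^ 2 ≠ 0 →
        msOp (fun w => w.1 * w.2 + 1 - w.2 ^ 2) z = 0) ∧
    (∀ θ : ℝ,
      (fun w : ℝ × ℝ => w.1 ^ 2 + w.1 * w.2) (Real.cos θ, Real.sin θ) =
        Real.cos θ ^ 2 + Real.sin θ * Real.cos θ ∧
      (fun w : ℝ × ℝ => w.1 * w.2 + 1 - w.2 ^ 2) (Real.cos θ, Real.sin θ) =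
        Real.cos θ ^ 2 + Real.sin θ * Real.cos θ) ∧
    (∃ z ∈ {w : ℝ × ℝ | w.1 ^ 2 + w.2 ^ 2 < 1},
      (fun w : ℝ × ℝ => w.1 ^ 2 + w.1 * w.2) z ≠
        (fun w : ℝ × ℝ => w.1 * w.2 + 1 - w.2 ^ 2) z) := by
  refine ⟨?_, ?_, ?_, ?_⟩
  · rintro z - hnc
    have hx : z.1 ≠ 0 := by
      intro h
      apply hnc
      rw [p1, q1, h]; ring
    unfold msOp
    have h1 : deriv (fun x => nh1 (fun w => w.1 ^ 2 + w.1 * w.2) (x, z.2)) z.1 = 0 := by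
      apply deriv_evconst (c := (if 0 < z.1 then 1 else -1) / Real.sqrt 2)
      have hev : ∀ᶠ x in nhds z.1, x ≠ 0 ∧ (0 < x ↔ 0 < z.1) := by
        rcases lt_or_gt_of_ne hx with h | h
        · filter_upwards [eventually_lt_nhds h] with x hx'
          exact ⟨hx'.ne, by constructor <;> intro <;> linarith⟩
        · filter_upwards [eventually_gt_nhds h] with x hx'
          exact ⟨hx'.ne', by constructor <;> intro <;> linarith⟩
      filter_upwards [hev] with x ⟨hx0, hsg⟩
      unfold nh1
      rw [p1 (x, z.2), q1 (x, z.2)]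
      simp only
      have h2x : (2 : ℝ) * x ≠ 0 := by simpa using hx0
      rw [sgn_eq h2x]
      congr 1
      simp [hsg, show (0:ℝ) < 2*x ↔ 0 < x by constructor <;> intro <;> linarith]
    have h2 : deriv (fun y => nh2 (fun w => w.1 ^ 2 + w.1 * w.2) (z.1, y)) z.2 = 0 := by
      apply deriv_evconst (c := 2 * z.1 / Real.sqrt ((2*z.1) ^ 2 + (2*z.1) ^ 2))
      filter_upwards with y
      unfold nh2
      rw [p1 (z.1, y), q1 (z.1, y)]
    rw [h1, h2, add_zero]
  · rintro z - hnc
    have hq : 2 * z.1 - 2 * z.2 ≠ 0 := by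
      intro h
      apply hnc
      rw [p2, q2, h]; ring
    unfold msOp
    have h1 : deriv (fun x => nh1 (fun w => w.1 * w.2 + 1 - w.2 ^ 2) (x, z.2)) z.1 = 0 := by
      apply deriv_evconst (c := 0)
      filter_upwards with x
      unfold nh1
      rw [p2 (x, z.2)]
      simp
    have h2 : deriv (fun y => nh2 (fun w => w.1 * w.2 + 1 - w.2 ^ 2) (z.1, y)) z.2 = 0 := by
      apply deriv_evconst (c := if 0 < 2 * z.1 - 2 * z.2 then 1 else -1)
      have hev : ∀ᶠ y in nhds z.2,
          2 * z.1 - 2 * y ≠ 0 ∧ (0 < 2 * z.1 - 2 * y ↔ 0 < 2 * z.1 - 2 * z.2) := by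
        rcases lt_or_gt_of_ne hq with h | h
        · have : z.1 < z.2 := by linarith
          filter_upwards [eventually_gt_nhds this] with y hy
          constructor
          · intro h'; nlinarith
          · constructor <;> intro <;> linarith
        · have : z.2 < z.1 := by linarith
          filter_upwards [eventually_lt_nhds this] with y hy
          constructor
          · intro h'; nlinarith
          · constructor <;> intro <;> linarith
      filter_upwards [hev] with y ⟨h0, hsg⟩
      unfold nh2
      rw [p2 (z.1, y), q2 (z.1, y)]
      simp only
      rw [sgn_eq' h0]
      simp [hsg]
    rw [h1, h2, add_zero]
  · intro θ
    constructor
    · simp only; ring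
    · simp only
      have := Real.sin_sq_add_cos_sq θ
      nlinarith [this]
  · refine ⟨(0, 0), by norm_num, by norm_num⟩
end

section
/- If u : ℝ² → ℝ is C² and satisfies the Heisenberg minimal surface equation (div of the horizontal Gauss map is zero), then for every λ > 0 the Riemannian mean curvature operator satisfies H_λ(u) = (1/λ²)·Δu / ((u_x - y)² + (u_y + x)² + 1/λ²)^{3/2}, where Δu = u_xx + u_yy; in particular H_λ(u) → 0 pointwise as λ → ∞ at noncharacteristic points. -/
open MeasureTheory Real Filter
set_option maxHeartbeats 1000000

noncomputable def uxx (u : ℝ × ℝ → ℝ) (z : ℝ × ℝ) : ℝ :=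
  deriv (fun x => deriv (fun t => u (t, z.2)) x) z.1

noncomputable def uyy (u : ℝ × ℝ → ℝ) (z : ℝ × ℝ) : ℝ :=
  deriv (fun y => deriv (fun t => u (z.1, t)) y) z.2

/-- The Riemannian mean curvature operator of the graph of `u` in `(H, g_l)`. -/
noncomputable def Hlam (l : ℝ) (u : ℝ × ℝ → ℝ) (z : ℝ × ℝ) : ℝ :=
  deriv (fun x =>
    pA u (x, z.2) /
      Real.sqrt ((pA u (x, z.2)) ^ 2 + (qA u (x, z.2)) ^ 2 + 1 / l ^ 2)) z.1 +
  deriv (fun y =>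
    qA u (z.1, y) /
      Real.sqrt ((pA u (z.1, y)) ^ 2 + (qA u (z.1, y)) ^ 2 + 1 / l ^ 2)) z.2

lemma sliceX_hasDerivAt {F : ℝ × ℝ → ℝ} {z : ℝ × ℝ} (h : DifferentiableAt ℝ F z) :
    HasDerivAt (fun x => F (x, z.2)) (fderiv ℝ F z (1, 0)) z.1 := by
  have h1 : HasDerivAt (fun x : ℝ => (x, z.2)) ((1:ℝ), (0:ℝ)) z.1 :=
    (hasDerivAt_id z.1).prodMk (hasDerivAt_const z.1 z.2)
  have h2 : HasFDerivAt F (fderiv ℝ F z) ((z.1, z.2) : ℝ × ℝ) := by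
    rw [Prod.mk.eta]; exact h.hasFDerivAt
  exact h2.comp_hasDerivAt z.1 h1

lemma sliceY_hasDerivAt {F : ℝ × ℝ → ℝ} {z : ℝ × ℝ} (h : DifferentiableAt ℝ F z) :
    HasDerivAt (fun y => F (z.1, y)) (fderiv ℝ F z (0, 1)) z.2 := by
  have h1 : HasDerivAt (fun y : ℝ => (z.1, y)) ((0:ℝ), (1:ℝ)) z.2 :=
    (hasDerivAt_const z.2 z.1).prodMk (hasDerivAt_id z.2)
  have h2 : HasFDerivAt F (fderiv ℝ F z) ((z.1, z.2) : ℝ × ℝ) := by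
    rw [Prod.mk.eta]; exact h.hasFDerivAt
  exact h2.comp_hasDerivAt z.2 h1

lemma deriv_div_sqrt {P Q : ℝ → ℝ} {a px qx c : ℝ} (hP : HasDerivAt P px a)
    (hQ : HasDerivAt Q qx a) (hE : 0 < P a ^ 2 + Q a ^ 2 + c) :
    HasDerivAt (fun x => P x / Real.sqrt (P x ^ 2 + Q x ^ 2 + c))
      ((px * (Q a ^ 2 + c) - P a * Q a * qx) /
        (Real.sqrt (P a ^ 2 + Q a ^ 2 + c)) ^ 3) a := by
  have hEd : HasDerivAt (fun x => P x ^ 2 + Q x ^ 2 + c)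
      (2 * P a ^ 1 * px + 2 * Q a ^ 1 * qx) a :=
    (((hP.pow 2).add (hQ.pow 2)).add_const c)
  have hS := hEd.sqrt (ne_of_gt hE)
  have hspos : 0 < Real.sqrt (P a ^ 2 + Q a ^ 2 + c) := Real.sqrt_pos.2 hE
  have hs := hspos.ne'
  have hD := hP.div hS hs
  refine hD.congr_deriv (Eq.symm ?_)
  have hsq : Real.sqrt (P a ^ 2 + Q a ^ 2 + c) ^ 2 = P a ^ 2 + Q a ^ 2 + c :=
    Real.sq_sqrt hE.le
  set s := Real.sqrt (P a ^ 2 + Q a ^ 2 + c) with hsdef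
  rw [div_eq_div_iff (pow_ne_zero 3 hs) (pow_ne_zero 2 hs)]
  field_simp
  linear_combination (-px) * hsq

lemma deriv_div_sqrt' {P Q : ℝ → ℝ} {a py qy c : ℝ} (hP : HasDerivAt P py a)
    (hQ : HasDerivAt Q qy a) (hE : 0 < P a ^ 2 + Q a ^ 2 + c) :
    HasDerivAt (fun y => Q y / Real.sqrt (P y ^ 2 + Q y ^ 2 + c))
      ((qy * (P a ^ 2 + c) - P a * Q a * py) /
        (Real.sqrt (P a ^ 2 + Q a ^ 2 + c)) ^ 3) a := by
  have h := deriv_div_sqrt hQ hP (by linarith)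
  have heq : (fun y => Q y / Real.sqrt (Q y ^ 2 + P y ^ 2 + c))
      = fun y => Q y / Real.sqrt (P y ^ 2 + Q y ^ 2 + c) := by
    funext y; rw [add_comm (Q y ^ 2)]
  rw [heq] at h
  have hval : (qy * (P a ^ 2 + c) - Q a * P a * py) /
        (Real.sqrt (Q a ^ 2 + P a ^ 2 + c)) ^ 3
      = (qy * (P a ^ 2 + c) - P a * Q a * py) /
        (Real.sqrt (P a ^ 2 + Q a ^ 2 + c)) ^ 3 := by
    rw [add_comm (Q a ^ 2)]; ring_nf
  rw [hval] at h
  exact h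

/-- If `u` is `C²` and satisfies the Heisenberg minimal surface equation, then
`H_l(u) = (1/l²)·(u_xx + u_yy) / W_l³` with `W_l = √(p² + q² + 1/l²)`, and
`H_l(u) → 0` pointwise as `l → ∞` at noncharacteristic points. -/
theorem riemannian_mean_curvature_formula (u : ℝ × ℝ → ℝ) (hu : ContDiff ℝ 2 u)
    (hms : ∀ z : ℝ × ℝ, (pA u z) ^ 2 + (qA u z) ^ 2 ≠ 0 → msOp u z = 0) :
    (∀ l : ℝ, 0 < l → ∀ z : ℝ × ℝ, (pA u z) ^ 2 + (qA u z) ^ 2 ≠ 0 →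
      Hlam l u z =
        (1 / l ^ 2) * (uxx u z + uyy u z) /
          Real.sqrt ((pA u z) ^ 2 + (qA u z) ^ 2 + 1 / l ^ 2) ^ 3) ∧
    (∀ z : ℝ × ℝ, (pA u z) ^ 2 + (qA u z) ^ 2 ≠ 0 →
      Filter.Tendsto (fun l => Hlam l u z) Filter.atTop (nhds 0)) := by
  have hud : Differentiable ℝ u := hu.differentiable (by norm_num)
  have hfC : ContDiff ℝ 1 (fun w => fderiv ℝ u w) := hu.fderiv_right (by norm_num)
  set f₂ : ℝ × ℝ → ℝ := fun w => fderiv ℝ u w (1, 0) with hf₂def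
  set g₂ : ℝ × ℝ → ℝ := fun w => fderiv ℝ u w (0, 1) with hg₂def
  have hf₂ : ContDiff ℝ 1 f₂ := hfC.clm_apply contDiff_const
  have hg₂ : ContDiff ℝ 1 g₂ := hfC.clm_apply contDiff_const
  have hpA : pA u = fun w => f₂ w - w.2 := by
    funext w; unfold pA; rw [(sliceX_hasDerivAt (hud w)).deriv]
  have hqA : qA u = fun w => g₂ w + w.1 := by
    funext w; unfold qA; rw [(sliceY_hasDerivAt (hud w)).deriv]
  have main : ∀ l : ℝ, 0 < l → ∀ z : ℝ × ℝ, (pA u z) ^ 2 + (qA u z) ^ 2 ≠ 0 →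
      Hlam l u z =
        (1 / l ^ 2) * (uxx u z + uyy u z) /
          Real.sqrt ((pA u z) ^ 2 + (qA u z) ^ 2 + 1 / l ^ 2) ^ 3 := by
    intro l hl z hz
    have hE0 : 0 < (pA u z) ^ 2 + (qA u z) ^ 2 :=
      lt_of_le_of_ne (by positivity) (Ne.symm hz)
    have hf₂d : DifferentiableAt ℝ f₂ z := (hf₂.differentiable (by norm_num)) z
    have hg₂d : DifferentiableAt ℝ g₂ z := (hg₂.differentiable (by norm_num)) z
    -- the four partial derivatives of p and q
    have huxx : uxx u z = fderiv ℝ f₂ z (1, 0) := by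
      unfold uxx
      have heq : (fun x => deriv (fun t => u (t, z.2)) x) = fun x => f₂ (x, z.2) := by
        funext x
        exact (sliceX_hasDerivAt (z := (x, z.2)) (hud (x, z.2))).deriv
      rw [heq, (sliceX_hasDerivAt hf₂d).deriv]
    have huyy : uyy u z = fderiv ℝ g₂ z (0, 1) := by
      unfold uyy
      have heq : (fun y => deriv (fun t => u (z.1, t)) y) = fun y => g₂ (z.1, y) := by
        funext y
        exact (sliceY_hasDerivAt (z := (z.1, y)) (hud (z.1, y))).deriv
      rw [heq, (sliceY_hasDerivAt hg₂d).deriv]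
    have hPx : HasDerivAt (fun x => pA u (x, z.2)) (uxx u z) z.1 := by
      rw [huxx]; simp only [hpA]
      exact (sliceX_hasDerivAt hf₂d).sub_const z.2
    have hPy : HasDerivAt (fun y => pA u (z.1, y)) (fderiv ℝ f₂ z (0, 1) - 1) z.2 := by
      simp only [hpA]
      exact (sliceY_hasDerivAt hf₂d).sub (hasDerivAt_id z.2)
    have hQx : HasDerivAt (fun x => qA u (x, z.2)) (fderiv ℝ g₂ z (1, 0) + 1) z.1 := by
      simp only [hqA]
      exact (sliceX_hasDerivAt hg₂d).add (hasDerivAt_id z.1)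
    have hQy : HasDerivAt (fun y => qA u (z.1, y)) (uyy u z) z.2 := by
      rw [huyy]; simp only [hqA]
      exact (sliceY_hasDerivAt hg₂d).add_const z.1
    set px := uxx u z
    set qy := uyy u z
    set py := fderiv ℝ f₂ z (0, 1) - 1
    set qx := fderiv ℝ g₂ z (1, 0) + 1
    set P0 := pA u z with hP0
    set Q0 := qA u z with hQ0
    -- the minimal surface equation gives the key algebraic identity
    have hE00 : 0 < P0 ^ 2 + Q0 ^ 2 + 0 := by simpa using hE0
    have hd1 := deriv_div_sqrt (c := 0) hPx hQx hE00
    have hd2 := deriv_div_sqrt' (c := 0) hPy hQy hE00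
    have e1 : (fun x => nh1 u (x, z.2))
        = fun x => pA u (x, z.2) /
            Real.sqrt (pA u (x, z.2) ^ 2 + qA u (x, z.2) ^ 2 + 0) := by
      funext x; simp [nh1]
    have e2 : (fun y => nh2 u (z.1, y))
        = fun y => qA u (z.1, y) /
            Real.sqrt (pA u (z.1, y) ^ 2 + qA u (z.1, y) ^ 2 + 0) := by
      funext y; simp [nh2]
    have hmsval : msOp u z =
        (px * (Q0 ^ 2 + 0) - P0 * Q0 * qx + (qy * (P0 ^ 2 + 0) - P0 * Q0 * py)) /
          (Real.sqrt (P0 ^ 2 + Q0 ^ 2 + 0)) ^ 3 := by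
      unfold msOp
      rw [e1, e2, hd1.deriv, hd2.deriv, ← add_div]
    have hden : (Real.sqrt (P0 ^ 2 + Q0 ^ 2 + 0)) ^ 3 ≠ 0 :=
      pow_ne_zero _ (Real.sqrt_pos.2 hE00).ne'
    have hnum : px * (Q0 ^ 2 + 0) - P0 * Q0 * qx + (qy * (P0 ^ 2 + 0) - P0 * Q0 * py) = 0 := by
      have h0 := hms z hz
      rw [hmsval] at h0
      rcases div_eq_zero_iff.1 h0 with h | h
      · exact h
      · exact absurd h hden
    -- now the Riemannian mean curvature
    have hEc : 0 < P0 ^ 2 + Q0 ^ 2 + 1 / l ^ 2 := by positivity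
    have hd1' := deriv_div_sqrt (c := 1 / l ^ 2) hPx hQx hEc
    have hd2' := deriv_div_sqrt' (c := 1 / l ^ 2) hPy hQy hEc
    have hH : Hlam l u z =
        (px * (Q0 ^ 2 + 1 / l ^ 2) - P0 * Q0 * qx +
          (qy * (P0 ^ 2 + 1 / l ^ 2) - P0 * Q0 * py)) /
          (Real.sqrt (P0 ^ 2 + Q0 ^ 2 + 1 / l ^ 2)) ^ 3 := by
      unfold Hlam
      rw [hd1'.deriv, hd2'.deriv, ← add_div]
    rw [hH]
    congr 1
    linear_combination hnum
  refine ⟨main, fun z hz => ?_⟩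
  have hE0 : 0 < (pA u z) ^ 2 + (qA u z) ^ 2 :=
    lt_of_le_of_ne (by positivity) (Ne.symm hz)
  have t1 : Tendsto (fun l : ℝ => 1 / l ^ 2) atTop (nhds 0) := by
    simpa using Filter.Tendsto.div_atTop (tendsto_const_nhds (x := (1:ℝ))) (tendsto_pow_atTop (by norm_num : 2 ≠ 0))
  have t2 : Tendsto (fun l : ℝ => Real.sqrt ((pA u z) ^ 2 + (qA u z) ^ 2 + 1 / l ^ 2) ^ 3)
      atTop (nhds (Real.sqrt ((pA u z) ^ 2 + (qA u z) ^ 2 + 0) ^ 3)) := by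
    exact (((tendsto_const_nhds.add t1).sqrt).pow 3)
  have hden : Real.sqrt ((pA u z) ^ 2 + (qA u z) ^ 2 + 0) ^ 3 ≠ 0 := by
    have : 0 < (pA u z) ^ 2 + (qA u z) ^ 2 + 0 := by simpa using hE0
    exact pow_ne_zero _ (Real.sqrt_pos.2 this).ne'
  have t3 : Tendsto (fun l : ℝ =>
      (1 / l ^ 2) * (uxx u z + uyy u z) /
        Real.sqrt ((pA u z) ^ 2 + (qA u z) ^ 2 + 1 / l ^ 2) ^ 3) atTop (nhds 0) := by
    have := ((t1.mul_const (uxx u z + uyy u z)).div t2 hden)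
    rw [zero_mul, zero_div] at this
    exact this
  refine t3.congr' ?_
  filter_upwards [eventually_gt_atTop (0:ℝ)] with l hl
  exact (main l hl z hz).symm
end

section
/- For a, b > 0 with b·r² > 1, the function v(r) = (√(b r² - 1))/b - a·arctan(1/√(b r² - 1)) satisfies the ODE v''(r) = -(v'(r)·(2a² + 2r²a) + r²·v'(r)³) / (r·(a² + 2r²a + r⁴)) on the region r > 1/√b. -/
lemma corkscrew_hasDeriv (a b : ℝ) (hb : 0 < b) {s : ℝ} (hs : 1 < b * s ^ 2) (hs0 : 0 < s) :
    HasDerivAt (fun s =>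
      Real.sqrt (b * s ^ 2 - 1) / b -
        a * Real.arctan (1 / Real.sqrt (b * s ^ 2 - 1)))
      ((s ^ 2 + a) / (s * Real.sqrt (b * s ^ 2 - 1))) s := by
  have hpos : 0 < b * s ^ 2 - 1 := by linarith
  set w := Real.sqrt (b * s ^ 2 - 1) with hwdef
  have hw : 0 < w := Real.sqrt_pos.mpr hpos
  have hw2 : w ^ 2 = b * s ^ 2 - 1 := Real.sq_sqrt hpos.le
  have h1 : HasDerivAt (fun s : ℝ => b * s ^ 2 - 1) (b * (2 * s)) s := by
    simpa using ((hasDerivAt_pow 2 s).const_mul b).sub_const 1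
  have h2 : HasDerivAt (fun s : ℝ => Real.sqrt (b * s ^ 2 - 1))
      (1 / (2 * w) * (b * (2 * s))) s :=
    (Real.hasDerivAt_sqrt (ne_of_gt hpos)).comp s h1
  have h4 : HasDerivAt (fun s : ℝ => (Real.sqrt (b * s ^ 2 - 1))⁻¹)
      (-(1 / (2 * w) * (b * (2 * s))) / w ^ 2) s := h2.inv (ne_of_gt hw)
  have h5 : HasDerivAt (fun s : ℝ => Real.arctan (Real.sqrt (b * s ^ 2 - 1))⁻¹)
      (1 / (1 + (w⁻¹) ^ 2) * (-(1 / (2 * w) * (b * (2 * s))) / w ^ 2)) s :=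
    (Real.hasDerivAt_arctan _).comp s h4
  have h6 := (h2.div_const b).sub (h5.const_mul a)
  have heq : (fun s : ℝ => Real.sqrt (b * s ^ 2 - 1) / b -
      a * Real.arctan (Real.sqrt (b * s ^ 2 - 1))⁻¹) =
      (fun s : ℝ => Real.sqrt (b * s ^ 2 - 1) / b -
      a * Real.arctan (1 / Real.sqrt (b * s ^ 2 - 1))) := by
    funext x; rw [one_div]
  simp only [Pi.sub_def] at h6
  rw [heq] at h6
  refine h6.congr_deriv (Eq.symm ?_)
  have h1w2 : 1 + (w⁻¹) ^ 2 = (b * s ^ 2) / w ^ 2 := by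
    field_simp
    linarith [hw2]
  rw [h1w2]
  field_simp
  ring_nf


/-- The closed-form function
`v(r) = √(br² - 1)/b - a·arctan(1/√(br² - 1))` solves the corkscrew-invariant
reduction of the Heisenberg minimal surface equation
`v'' = -(v'(2a² + 2r²a) + r²(v')³)/(r(a² + 2r²a + r⁴))` for `r > 1/√b`. -/
theorem corkscrew_ode (a b : ℝ) (ha : 0 < a) (hb : 0 < b) (r : ℝ)
    (hr : 1 / Real.sqrt b < r) :
    deriv (deriv (fun s =>
      Real.sqrt (b * s ^ 2 - 1) / b -
        a * Real.arctan (1 / Real.sqrt (b * s ^ 2 - 1)))) r =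
    -(deriv (fun s =>
        Real.sqrt (b * s ^ 2 - 1) / b -
          a * Real.arctan (1 / Real.sqrt (b * s ^ 2 - 1))) r *
        (2 * a ^ 2 + 2 * r ^ 2 * a) +
      r ^ 2 *
        (deriv (fun s =>
          Real.sqrt (b * s ^ 2 - 1) / b -
            a * Real.arctan (1 / Real.sqrt (b * s ^ 2 - 1))) r) ^ 3) /
      (r * (a ^ 2 + 2 * r ^ 2 * a + r ^ 4)) := by
  have hsb : 0 < Real.sqrt b := Real.sqrt_pos.mpr hb
  have hr0 : 0 < r := lt_trans (by positivity) hr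
  have hbr : 1 < b * r ^ 2 := by
    rw [div_lt_iff₀ hsb] at hr
    nlinarith [Real.sq_sqrt hb.le]
  have hpos : 0 < b * r ^ 2 - 1 := by linarith
  set w := Real.sqrt (b * r ^ 2 - 1) with hwdef
  have hw : 0 < w := Real.sqrt_pos.mpr hpos
  have hw2 : w ^ 2 = b * r ^ 2 - 1 := Real.sq_sqrt hpos.le
  -- eventual equality of deriv f with g
  have hev : ∀ᶠ s in nhds r, 1 < b * s ^ 2 ∧ 0 < s := by
    apply Filter.Eventually.and
    · exact Filter.eventually_of_mem
        ((isOpen_lt continuous_const (continuous_const.mul (continuous_pow 2))).mem_nhds hbr)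
        (fun s hs => hs)
    · exact Filter.eventually_of_mem
        ((isOpen_lt continuous_const continuous_id).mem_nhds hr0) (fun s hs => hs)
  have hEq : deriv (fun s =>
      Real.sqrt (b * s ^ 2 - 1) / b -
        a * Real.arctan (1 / Real.sqrt (b * s ^ 2 - 1)))
      =ᶠ[nhds r] fun s => (s ^ 2 + a) / (s * Real.sqrt (b * s ^ 2 - 1)) :=
    hev.mono fun s hs => (corkscrew_hasDeriv a b hb hs.1 hs.2).deriv
  rw [hEq.deriv_eq, (corkscrew_hasDeriv a b hb hbr hr0).deriv]
  -- derivative of g at r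
  have h1 : HasDerivAt (fun s : ℝ => b * s ^ 2 - 1) (b * (2 * r)) r := by
    simpa using ((hasDerivAt_pow 2 r).const_mul b).sub_const 1
  have h2 : HasDerivAt (fun s : ℝ => Real.sqrt (b * s ^ 2 - 1))
      (1 / (2 * w) * (b * (2 * r))) r :=
    (Real.hasDerivAt_sqrt (ne_of_gt hpos)).comp r h1
  have hnum : HasDerivAt (fun s : ℝ => s ^ 2 + a) (2 * r) r := by
    simpa using (hasDerivAt_pow 2 r).add_const a
  have hden : HasDerivAt (fun s : ℝ => s * Real.sqrt (b * s ^ 2 - 1))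
      (1 * w + r * (1 / (2 * w) * (b * (2 * r)))) r :=
    (hasDerivAt_id r).mul h2
  have hden0 : r * w ≠ 0 := by positivity
  have hg : HasDerivAt (fun s : ℝ => (s ^ 2 + a) / (s * Real.sqrt (b * s ^ 2 - 1)))
      ((2 * r * (r * w) - (r ^ 2 + a) * (1 * w + r * (1 / (2 * w) * (b * (2 * r))))) /
        (r * w) ^ 2) r := hnum.div hden hden0
  rw [hg.deriv]
  rw [← hwdef]
  clear_value w
  have hden2 : a ^ 2 + 2 * r ^ 2 * a + r ^ 4 > 0 := by positivity
  field_simp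
  ring_nf
  rw [hw2]
  ring
end
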